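/- Let s ≥ 2 be an integer, let k be a positive integer with k + 1 < s, and let λ and μ be s-minimal biliaison types such that every entry of λ is < k and every entry of μ is > k + 1. Then q_s(λ ∪ (k+1) ∪ μ) − q_s(λ ∪ (k) ∪ μ) = (s−1)(s−1−2k) − 2(d_{μ′} − d_λ), where (k) denotes the one-term sequence with entry k and μ′ is the s-dual of μ. -/

import Mathlib

/-- An `s`-minimal biliaison type: a strictly increasing finite sequence of
positive integers, all strictly less than `s` (the empty sequence is allowed). -/
def SMinimal (s : ℕ) (l : List ℕ) : Prop :=
  l.Chain' (· < ·) ∧ ∀ k ∈ l, 0 < k ∧ k < s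

/-- The quadratic form `q_s(λ) = Σ_i k_i(s−1)(s−k_i) − 2 Σ_{i<j} k_i(s−k_j)`. -/
def qform (s : ℕ) (l : List ℕ) : ℤ :=
  (∑ i : Fin l.length, (l.get i : ℤ) * ((s : ℤ) - 1) * ((s : ℤ) - l.get i))
  - 2 * ∑ i : Fin l.length, ∑ j : Fin l.length,
      if (i : ℕ) < (j : ℕ) then (l.get i : ℤ) * ((s : ℤ) - l.get j) else 0

/-- The `s`-dual `λ′ = (s−k_u, …, s−k_1)` of a biliaison type. -/
def sdual (s : ℕ) (l : List ℕ) : List ℕ := (l.map (fun k => s - k)).reverse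

/-- Auxiliary: `Σ_{b ∈ l} (s − b)` computed in `ℤ`. -/
def Tf (s : ℕ) (l : List ℕ) : ℤ := (l.map (fun b : ℕ => (s:ℤ) - (b:ℤ))).sum

/-- Recursive version of the quadratic form. -/
def Qf (s : ℕ) : List ℕ → ℤ
  | [] => 0
  | a :: t => (a:ℤ)*((s:ℤ)-1)*((s:ℤ)-a) - 2*(a:ℤ)*Tf s t + Qf s t

lemma Tf_cons (s a : ℕ) (t : List ℕ) : Tf s (a :: t) = ((s:ℤ) - a) + Tf s t := by
  simp [Tf]

lemma Tf_fin (s : ℕ) (l : List ℕ) :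
    Tf s l = ∑ i : Fin l.length, ((s:ℤ) - l.get i) := by
  induction l with
  | nil => simp [Tf]
  | cons a t ih =>
    rw [Tf_cons, ih]
    simp [Fin.sum_univ_succ]
    ring

lemma qform_eq_Qf (s : ℕ) (l : List ℕ) : qform s l = Qf s l := by
  induction l with
  | nil => simp [qform, Qf]
  | cons a t ih =>
    simp only [qform, Qf] at *
    simp only [List.length_cons, Fin.sum_univ_succ, Fin.val_succ, Fin.val_zero,
      Nat.succ_lt_succ_iff, Nat.not_lt_zero, if_false, Nat.zero_lt_succ, if_true,
      List.get_eq_getElem, List.getElem_cons_zero, List.getElem_cons_succ, Tf_fin, zero_add] at *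
    rw [← Finset.mul_sum]
    linarith [ih]

lemma Tf_append (s : ℕ) (l m : List ℕ) : Tf s (l ++ m) = Tf s l + Tf s m := by
  simp [Tf]

lemma Qf_append (s : ℕ) (l m : List ℕ) :
    Qf s (l ++ m) = Qf s l + Qf s m - 2 * (l.sum : ℤ) * Tf s m := by
  induction l with
  | nil => simp [Qf]
  | cons a t ih =>
    rw [List.cons_append]
    show _ - 2*(a:ℤ)*Tf s (t ++ m) + Qf s (t ++ m) = _
    rw [Tf_append, ih, List.sum_cons]
    simp only [Qf]
    push_cast
    ring

lemma sdual_sum (s : ℕ) (m : List ℕ) (h : ∀ b ∈ m, b ≤ s) :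
    ((sdual s m).sum : ℤ) = Tf s m := by
  unfold sdual
  rw [List.sum_reverse]
  induction m with
  | nil => simp [Tf]
  | cons a t ih =>
    rw [List.map_cons, List.sum_cons, Tf_cons, Nat.cast_add,
      Nat.cast_sub (h a List.mem_cons_self), ih (fun b hb => h b (List.mem_cons_of_mem a hb))]

/-- Proposition 8.4(b): replacing the middle entry `k` by `k+1` changes `q_s` by
`(s−1)(s−1−2k) − 2(d_{μ′} − d_λ)`. -/
theorem stmt2 (s k : ℕ) (hs : 2 ≤ s) (hk : 0 < k) (hks : k + 1 < s)
    (l m : List ℕ) (hl : SMinimal s l) (hm : SMinimal s m)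
    (hlk : ∀ a ∈ l, a < k) (hkm : ∀ b ∈ m, k + 1 < b) :
    qform s (l ++ [k + 1] ++ m) - qform s (l ++ [k] ++ m)
      = ((s : ℤ) - 1) * ((s : ℤ) - 1 - 2 * k)
        - 2 * (((sdual s m).sum : ℤ) - (l.sum : ℤ)) := by
  rw [sdual_sum s m (fun b hb => le_of_lt (hm.2 b hb).2)]
  rw [qform_eq_Qf, qform_eq_Qf,
    show l ++ [k + 1] ++ m = l ++ ((k + 1) :: m) by simp,
    show l ++ [k] ++ m = l ++ (k :: m) by simp,
    Qf_append s l ((k + 1) :: m), Qf_append s l (k :: m)]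
  simp only [Qf, Tf_cons]
  push_cast
  ring
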